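/- For any positive integers r, a₁,...,a_{2n}, and any k ≥ 0, n ≥ 1: ∫₀¹ ∏_{i=1}^{2n} B̃_{2k+1}(r aᵢ x) dx = ∫₀¹ ∏_{i=1}^{2n} B̃_{2k+1}(aᵢ x) dx. -/

import Mathlib

open Real

/-- The periodic Bernoulli function `B̃ₘ(x) = Bₘ(x - ⌊x⌋)`. -/
noncomputable def periodicBernoulli (m : ℕ) (x : ℝ) : ℝ :=
  Polynomial.aeval (Int.fract x) (Polynomial.bernoulli m)

lemma periodicBernoulli_measurable (m : ℕ) : Measurable (periodicBernoulli m) := by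
  have h1 : Continuous fun y : ℝ => Polynomial.aeval y (Polynomial.bernoulli m) :=
    Polynomial.continuous_aeval _
  exact h1.measurable.comp measurable_fract

lemma periodicBernoulli_bound (m : ℕ) : ∃ C : ℝ, 0 ≤ C ∧ ∀ x, |periodicBernoulli m x| ≤ C := by
  obtain ⟨C, hC⟩ := (isCompact_Icc (a := (0:ℝ)) (b := 1)).exists_bound_of_continuousOn
    (Polynomial.continuous_aeval (Polynomial.bernoulli m)).continuousOn
  refine ⟨max C 0, le_max_right _ _, fun x => ?_⟩
  have := hC (Int.fract x) ⟨Int.fract_nonneg x, (Int.fract_lt_one x).le⟩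
  exact le_trans this (le_max_left _ _)

lemma periodicBernoulli_nat_periodic (m c : ℕ) :
    Function.Periodic (fun x => periodicBernoulli m (c * x)) 1 := by
  intro x
  have h : Int.fract ((c:ℝ) * (x + 1)) = Int.fract ((c:ℝ) * x) := by
    rw [mul_add, mul_one]
    exact_mod_cast Int.fract_add_natCast ((c:ℝ) * x) c
  simp only [periodicBernoulli, h]

theorem bernoulli_integral_scaling_invariant (k n r : ℕ) (hn : 0 < n) (hr : 0 < r)
    (a : Fin (2 * n) → ℕ) (ha : ∀ i, 0 < a i) :
    ∫ x in (0:ℝ)..1, ∏ i, periodicBernoulli (2 * k + 1) ((r * a i : ℕ) * x) =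
      ∫ x in (0:ℝ)..1, ∏ i, periodicBernoulli (2 * k + 1) (a i * x) := by
  set m := 2 * k + 1
  set F : ℝ → ℝ := fun x => ∏ i, periodicBernoulli m (a i * x) with hF
  have hFper : Function.Periodic F 1 := by
    intro x
    simp only [hF]
    exact Finset.prod_congr rfl fun i _ => periodicBernoulli_nat_periodic m (a i) x
  have hFmeas : Measurable F := by
    apply Finset.measurable_prod
    intro i _
    exact (periodicBernoulli_measurable m).comp (measurable_const_mul _)
  obtain ⟨C, hC0, hC⟩ := periodicBernoulli_bound m
  have hFbd : ∀ x, ‖F x‖ ≤ C ^ (2 * n) := by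
    intro x
    simp only [hF, Real.norm_eq_abs, Finset.abs_prod]
    calc ∏ i, |periodicBernoulli m (a i * x)| ≤ ∏ _i : Fin (2 * n), C :=
          Finset.prod_le_prod (fun i _ => abs_nonneg _) (fun i _ => hC _)
      _ = C ^ (2 * n) := by simp
  have hFint : ∀ t₁ t₂ : ℝ, IntervalIntegrable F MeasureTheory.volume t₁ t₂ := by
    intro t₁ t₂
    rw [intervalIntegrable_iff]
    exact MeasureTheory.Measure.integrableOn_of_bounded
      (by exact measure_Ioc_lt_top.ne)
      hFmeas.aestronglyMeasurable (MeasureTheory.ae_of_all _ fun x => hFbd x)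
  have key : ∫ x in (0:ℝ)..1, F ((r : ℝ) * x) = ∫ x in (0:ℝ)..1, F x := by
    have hr' : (r : ℝ) ≠ 0 := Nat.cast_ne_zero.mpr hr.ne'
    have h1 : (r : ℝ) • ∫ x in (0:ℝ)..1, F ((r : ℝ) * x) =
        ∫ x in ((r : ℝ) * 0)..((r : ℝ) * 1), F x :=
      intervalIntegral.smul_integral_comp_mul_left F (r : ℝ)
    have h2 : ∫ x in (0:ℝ)..(0 + (r : ℤ) • (1:ℝ)), F x = (r : ℤ) • ∫ x in (0:ℝ)..(0 + 1), F x :=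
      hFper.intervalIntegral_add_zsmul_eq (r : ℤ) 0 hFint
    simp only [mul_zero, mul_one, zero_add, zsmul_eq_mul, Int.cast_natCast, smul_eq_mul]
      at h1 h2
    exact mul_left_cancel₀ hr' (h1.trans h2)
  have heq : (∫ x in (0:ℝ)..1, ∏ i, periodicBernoulli m ((r * a i : ℕ) * x)) =
      ∫ x in (0:ℝ)..1, F ((r : ℝ) * x) := by
    apply intervalIntegral.integral_congr
    intro x _
    apply Finset.prod_congr rfl
    intro i _
    congr 1
    push_cast
    ring
  rw [heq]
  exact key
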